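/- arXiv:2101.06078 — 2 statements merged into one kernel-verified Lean document; each statement's English description precedes it below -/
import Mathlib

section
/- Let A be a nonempty finite subset of ℝ^n and let M = sup_{a ∈ A} ‖a‖ (Euclidean norm). Let σ_1,...,σ_n be independent Rademacher random variables (taking values ±1 with probability 1/2 each). Then E_σ[ sup_{a ∈ A} (1/n) Σ_{i=1}^n σ_i a_i ] ≤ M √(2 log |A|) / n. -/
set_option maxHeartbeats 1000000


/-- Rademacher sign associated to a Boolean coin flip. -/
noncomputable def radSign (b : Bool) : ℝ := if b then 1 else -1

open Real Finset in
/-- MGF-style bound: for every `l > 0`,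
`(∑ σ, sup'_a ∑ i σ_i a_i) / 2^n ≤ log |A| / l + l * M^2 / 2`. -/
theorem massart_key (n : ℕ)
    (A : Finset (EuclideanSpace ℝ (Fin n))) (hA : A.Nonempty)
    (M : ℝ) (hM : M = A.sup' hA (fun a => ‖a‖)) (l : ℝ) (hl : 0 < l) :
    (∑ σ : Fin n → Bool, A.sup' hA (fun a => ∑ i, radSign (σ i) * a i)) / 2 ^ n
      ≤ Real.log A.card / l + l * M ^ 2 / 2 := by
  classical
  set T : (Fin n → Bool) → ℝ := fun σ => A.sup' hA (fun a => ∑ i, radSign (σ i) * a i) with hT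
  have hcard : (Fintype.card (Fin n → Bool) : ℝ) = 2 ^ n := by
    simp [Fintype.card_fun]
  have h2n : (0:ℝ) < 2 ^ n := by positivity
  -- Jensen
  have jensen : Real.exp (l * ((∑ σ : Fin n → Bool, T σ) / 2 ^ n))
      ≤ (∑ σ : Fin n → Bool, Real.exp (l * T σ)) / 2 ^ n := by
    have := convexOn_exp.map_sum_le (t := (Finset.univ : Finset (Fin n → Bool)))
      (w := fun _ => ((2:ℝ) ^ n)⁻¹) (p := fun σ => l * T σ)
      (fun _ _ => by positivity)
      (by rw [Finset.sum_const, nsmul_eq_mul, ← hcard]; field_simp; simp)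
      (fun _ _ => Set.mem_univ _)
    calc Real.exp (l * ((∑ σ : Fin n → Bool, T σ) / 2 ^ n))
        = Real.exp (∑ σ : Fin n → Bool, ((2:ℝ) ^ n)⁻¹ • (l * T σ)) := by
          congr 1
          simp only [smul_eq_mul, ← Finset.mul_sum]
          ring
      _ ≤ ∑ σ : Fin n → Bool, ((2:ℝ) ^ n)⁻¹ • Real.exp (l * T σ) := this
      _ = (∑ σ : Fin n → Bool, Real.exp (l * T σ)) / 2 ^ n := by
          simp only [smul_eq_mul]
          rw [← Finset.mul_sum]
          field_simp
  -- bound exp(l * T σ) by the sum over a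
  have step2 : ∀ σ : Fin n → Bool,
      Real.exp (l * T σ) ≤ ∑ a ∈ A, Real.exp (l * ∑ i, radSign (σ i) * a i) := by
    intro σ
    obtain ⟨a₀, ha₀, hsup⟩ := Finset.exists_mem_eq_sup' hA (fun a => ∑ i, radSign (σ i) * a i)
    have heq : T σ = ∑ i, radSign (σ i) * a₀ i := by rw [hT]; exact hsup
    rw [heq]
    exact Finset.single_le_sum
      (f := fun a : EuclideanSpace ℝ (Fin n) => Real.exp (l * ∑ i, radSign (σ i) * a i))
      (fun a _ => (Real.exp_pos _).le) ha₀
  -- factorization over coordinates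
  have hMa : ∀ a ∈ A, ‖a‖ ≤ M := fun a ha => hM ▸ Finset.le_sup' (fun a => ‖a‖) ha
  have step3 : ∑ σ : Fin n → Bool, ∑ a ∈ A, Real.exp (l * ∑ i, radSign (σ i) * a i)
      ≤ (A.card : ℝ) * (2 ^ n * Real.exp (l ^ 2 * M ^ 2 / 2)) := by
    rw [Finset.sum_comm]
    have key_a : ∀ a ∈ A, ∑ σ : Fin n → Bool, Real.exp (l * ∑ i, radSign (σ i) * a i)
        ≤ 2 ^ n * Real.exp (l ^ 2 * M ^ 2 / 2) := by
      intro a ha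
      have hfac : ∑ σ : Fin n → Bool, Real.exp (l * ∑ i, radSign (σ i) * a i)
          = ∏ i : Fin n, ∑ b : Bool, Real.exp (l * (radSign b * a i)) := by
        rw [Finset.prod_univ_sum, ← Fintype.piFinset_univ]
        apply Finset.sum_congr rfl
        intro σ _
        rw [Finset.mul_sum, Real.exp_sum]
      rw [hfac]
      have hcosh : ∀ i : Fin n, ∑ b : Bool, Real.exp (l * (radSign b * a i))
          ≤ 2 * Real.exp ((l * a i) ^ 2 / 2) := by
        intro i
        have heq : ∑ b : Bool, Real.exp (l * (radSign b * a i))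
            = 2 * Real.cosh (l * a i) := by
          rw [Real.cosh_eq]
          simp [radSign]
          ring_nf
        rw [heq]
        have := Real.cosh_le_exp_half_sq (l * a i)
        nlinarith
      calc ∏ i : Fin n, ∑ b : Bool, Real.exp (l * (radSign b * a i))
          ≤ ∏ i : Fin n, 2 * Real.exp ((l * a i) ^ 2 / 2) := by
            apply Finset.prod_le_prod
            · intro i _
              exact Finset.sum_nonneg fun b _ => (Real.exp_pos _).le
            · intro i _; exact hcosh i
        _ = 2 ^ n * Real.exp (∑ i, (l * a i) ^ 2 / 2) := by
            rw [Finset.prod_mul_distrib, ← Real.exp_sum]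
            simp
        _ ≤ 2 ^ n * Real.exp (l ^ 2 * M ^ 2 / 2) := by
            apply mul_le_mul_of_nonneg_left _ (le_of_lt h2n)
            apply Real.exp_le_exp.2
            have hnorm : ∑ i, (a i) ^ 2 ≤ M ^ 2 := by
              have h1 : ‖a‖ ^ 2 = ∑ i, (a i) ^ 2 := by
                rw [EuclideanSpace.norm_eq, Real.sq_sqrt (by positivity)]
                simp [Real.norm_eq_abs, sq_abs]
              have h2' : ‖a‖ ^ 2 ≤ M ^ 2 :=
                pow_le_pow_left₀ (norm_nonneg _) (hMa a ha) 2
              linarith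
            calc ∑ i, (l * a i) ^ 2 / 2 = l ^ 2 * (∑ i, (a i) ^ 2) / 2 := by
                  rw [Finset.mul_sum, Finset.sum_div]
                  exact Finset.sum_congr rfl fun i _ => by ring
              _ ≤ l ^ 2 * M ^ 2 / 2 := by nlinarith [sq_nonneg l]
    calc ∑ a ∈ A, ∑ σ : Fin n → Bool, Real.exp (l * ∑ i, radSign (σ i) * a i)
        ≤ ∑ _a ∈ A, 2 ^ n * Real.exp (l ^ 2 * M ^ 2 / 2) := Finset.sum_le_sum key_a
      _ = (A.card : ℝ) * (2 ^ n * Real.exp (l ^ 2 * M ^ 2 / 2)) := by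
          rw [Finset.sum_const, nsmul_eq_mul]
  -- combine
  have hK1 : (1:ℝ) ≤ A.card := by exact_mod_cast hA.card_pos
  have hKpos : (0:ℝ) < A.card := lt_of_lt_of_le one_pos hK1
  have main : Real.exp (l * ((∑ σ : Fin n → Bool, T σ) / 2 ^ n))
      ≤ Real.exp (Real.log A.card + l ^ 2 * M ^ 2 / 2) := by
    calc Real.exp (l * ((∑ σ : Fin n → Bool, T σ) / 2 ^ n))
        ≤ (∑ σ : Fin n → Bool, Real.exp (l * T σ)) / 2 ^ n := jensen
      _ ≤ (∑ σ : Fin n → Bool, ∑ a ∈ A, Real.exp (l * ∑ i, radSign (σ i) * a i)) / 2 ^ n := by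
          gcongr with σ _
          exact step2 σ
      _ ≤ ((A.card : ℝ) * (2 ^ n * Real.exp (l ^ 2 * M ^ 2 / 2))) / 2 ^ n := by
          gcongr
      _ = Real.exp (Real.log A.card + l ^ 2 * M ^ 2 / 2) := by
          rw [Real.exp_add, Real.exp_log hKpos]
          field_simp
  have hle : l * ((∑ σ : Fin n → Bool, T σ) / 2 ^ n)
      ≤ Real.log A.card + l ^ 2 * M ^ 2 / 2 := Real.exp_le_exp.1 main
  have hX : (∑ σ : Fin n → Bool, T σ) / 2 ^ n
      ≤ (Real.log A.card + l ^ 2 * M ^ 2 / 2) / l := by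
    rw [le_div_iff₀ hl]
    linarith
  calc (∑ σ : Fin n → Bool, T σ) / 2 ^ n
      ≤ (Real.log A.card + l ^ 2 * M ^ 2 / 2) / l := hX
    _ = Real.log A.card / l + l * M ^ 2 / 2 := by
        field_simp

/-- **Massart's finite lemma.** For a nonempty finite set `A ⊆ ℝ^n` with
`M = sup_{a ∈ A} ‖a‖` (Euclidean norm), the expectation over independent
Rademacher signs `σ` of `sup_{a ∈ A} (1/n) Σ_i σ_i a_i` is at most
`M √(2 log |A|) / n`. -/
theorem massart_finite_lemma (n : ℕ) (hn : 0 < n)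
    (A : Finset (EuclideanSpace ℝ (Fin n))) (hA : A.Nonempty)
    (M : ℝ) (hM : M = A.sup' hA (fun a => ‖a‖)) :
    (∑ σ : Fin n → Bool,
        A.sup' hA (fun a => (1 / (n : ℝ)) * ∑ i, radSign (σ i) * a i)) / 2 ^ n
      ≤ M * Real.sqrt (2 * Real.log (A.card)) / n := by
  classical
  have hn' : (0:ℝ) < n := by exact_mod_cast hn
  -- pull out the 1/n factor from the sup'
  have hpull : ∀ σ : Fin n → Bool,
      A.sup' hA (fun a => (1 / (n : ℝ)) * ∑ i, radSign (σ i) * a i)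
        = (1 / (n : ℝ)) * A.sup' hA (fun a => ∑ i, radSign (σ i) * a i) := by
    intro σ
    rw [Finset.comp_sup'_eq_sup'_comp hA (fun x : ℝ => (1 / (n : ℝ)) * x)]
    · rfl
    · intro x y
      exact mul_max_of_nonneg x y (by positivity)
  have hLHS : (∑ σ : Fin n → Bool,
      A.sup' hA (fun a => (1 / (n : ℝ)) * ∑ i, radSign (σ i) * a i)) / 2 ^ n
      = (1 / (n : ℝ)) *
        ((∑ σ : Fin n → Bool, A.sup' hA (fun a => ∑ i, radSign (σ i) * a i)) / 2 ^ n) := by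
    rw [Finset.sum_congr rfl fun σ _ => hpull σ, ← Finset.mul_sum]
    ring
  rw [hLHS]
  have hRHS : M * Real.sqrt (2 * Real.log (A.card)) / n
      = (1 / (n : ℝ)) * (M * Real.sqrt (2 * Real.log (A.card))) := by ring
  rw [hRHS]
  apply mul_le_mul_of_nonneg_left _ (by positivity)
  -- main inequality: ET ≤ M √(2 log |A|)
  set ET : ℝ :=
    (∑ σ : Fin n → Bool, A.sup' hA (fun a => ∑ i, radSign (σ i) * a i)) / 2 ^ n with hET
  have hMa : ∀ a ∈ A, ‖a‖ ≤ M := fun a ha => hM ▸ Finset.le_sup' (fun a => ‖a‖) ha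
  have hM0 : 0 ≤ M := le_trans (norm_nonneg _) (hMa _ hA.choose_spec)
  have hK1 : (1:ℝ) ≤ A.card := by exact_mod_cast hA.card_pos
  rcases eq_or_lt_of_le hM0 with hMz | hMpos
  · -- M = 0 : every element of A is 0
    have hzero : ∀ σ : Fin n → Bool,
        A.sup' hA (fun a => ∑ i, radSign (σ i) * a i) = 0 := by
      intro σ
      have : ∀ a ∈ A, (∑ i, radSign (σ i) * a i) = 0 := by
        intro a ha
        have : a = 0 := by
          have := hMa a ha
          rw [← hMz] at this
          exact norm_le_zero_iff.1 this
        subst this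
        simp
      rw [Finset.sup'_congr hA rfl this]
      exact Finset.sup'_const hA 0
    have : ET = 0 := by
      rw [hET, Finset.sum_congr rfl fun σ _ => hzero σ]
      simp
    rw [this, ← hMz]
    positivity
  · -- M > 0
    have hlogK : 0 ≤ Real.log (A.card) := Real.log_nonneg hK1
    rcases eq_or_lt_of_le hlogK with hlz | hlpos
    · -- log |A| = 0 : use key bound with l → 0
      rw [← hlz]
      have hbound : ∀ ε : ℝ, 0 < ε → ET ≤ ε := by
        intro ε hε
        have hl : 0 < 2 * ε / M ^ 2 := by positivity
        have := massart_key n A hA M hM (2 * ε / M ^ 2) hl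
        rw [← hlz] at this
        have heq : (0:ℝ) / (2 * ε / M ^ 2) + (2 * ε / M ^ 2) * M ^ 2 / 2 = ε := by
          field_simp
          ring
        rw [heq] at this
        exact this
      simp only [mul_zero, Real.sqrt_zero]
      by_contra hcon
      push_neg at hcon
      linarith [hbound (ET / 2) (by linarith)]
    · -- log |A| > 0 : optimize l = √(2 log |A|) / M
      set L : ℝ := Real.log (A.card) with hL
      have hsq : Real.sqrt (2 * L) ^ 2 = 2 * L := Real.sq_sqrt (by linarith)
      have hsqpos : 0 < Real.sqrt (2 * L) := Real.sqrt_pos.2 (by linarith)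
      set s : ℝ := Real.sqrt (2 * L) with hs
      have hl : 0 < s / M := by positivity
      have := massart_key n A hA M hM (s / M) hl
      calc ET ≤ L / (s / M) + (s / M) * M ^ 2 / 2 := this
        _ = M * s := by
            rw [show L = s ^ 2 / 2 by nlinarith]
            field_simp
            ring
end

section
/- Let (Δ_m) be a sequence of nonnegative reals satisfying Δ_{m+1} ≤ (1 − h_m/(s_m + c)) Δ_m + ε̄_m for all m ≥ 0, where c ≥ 0, h_m ≥ 0, s_m = s_0 + Σ_{i=0}^{m−1} h_i with s_0 ≥ 0, and ε̄_m ≥ 0. Then for all m ≥ 1, Δ_m ≤ ((s_0 + c)/(s_m + c)) Δ_0 + Σ_{j=1}^{m} ((s_j + c)/(s_m + c)) ε̄_{j−1}. -/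
/-- Lemma A2 (unrolled one-step recursion, following Zhang and Yu, 2005):
if `Δ_{m+1} ≤ (1 − h_m/(s_m + c)) Δ_m + ε̄_m` with `s_m = s_0 + Σ_{i<m} h_i`,
then `Δ_m ≤ ((s_0+c)/(s_m+c)) Δ_0 + Σ_{j=1}^m ((s_j+c)/(s_m+c)) ε̄_{j−1}`
for all `m ≥ 1`. -/
theorem recursion_unrolled_bound (Δ h ebar : ℕ → ℝ) (s : ℕ → ℝ) (s₀ c : ℝ)
    (hs₀ : 0 ≤ s₀) (hc : 0 ≤ c) (hpos : 0 < s₀ + c)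
    (hs : ∀ m, s m = s₀ + ∑ i ∈ Finset.range m, h i)
    (hΔ : ∀ m, 0 ≤ Δ m) (hh : ∀ m, 0 ≤ h m) (he : ∀ m, 0 ≤ ebar m)
    (hrec : ∀ m, Δ (m + 1) ≤ (1 - h m / (s m + c)) * Δ m + ebar m) :
    ∀ m : ℕ, 1 ≤ m →
      Δ m ≤ ((s 0 + c) / (s m + c)) * Δ 0
        + ∑ j ∈ Finset.Icc 1 m, ((s j + c) / (s m + c)) * ebar (j - 1) := by
  have hspos : ∀ m, 0 < s m + c := by
    intro m
    have : 0 ≤ ∑ i ∈ Finset.range m, h i := Finset.sum_nonneg fun i _ => hh i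
    rw [hs]; linarith
  have aux : ∀ m : ℕ, (s m + c) * Δ m ≤
      (s 0 + c) * Δ 0 + ∑ j ∈ Finset.Icc 1 m, (s j + c) * ebar (j - 1) := by
    intro m
    induction m with
    | zero => simp
    | succ n ih =>
      have hsucc : s (n + 1) = s n + h n := by
        rw [hs, hs, Finset.sum_range_succ]; ring
      have key : (s (n + 1) + c) * (1 - h n / (s n + c)) ≤ s n + c := by
        have hn := hspos n
        rw [hsucc]
        have : (s n + h n + c) * (1 - h n / (s n + c)) =
            ((s n + c) ^ 2 - (h n) ^ 2) / (s n + c) := by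
          field_simp; ring
        rw [this, div_le_iff₀ hn]
        nlinarith [sq_nonneg (h n)]
      have step : (s (n + 1) + c) * Δ (n + 1) ≤
          (s n + c) * Δ n + (s (n + 1) + c) * ebar n := by
        have h1 : (s (n + 1) + c) * Δ (n + 1) ≤
            (s (n + 1) + c) * ((1 - h n / (s n + c)) * Δ n + ebar n) :=
          mul_le_mul_of_nonneg_left (hrec n) (le_of_lt (hspos (n + 1)))
        have h2 : (s (n + 1) + c) * (1 - h n / (s n + c)) * Δ n ≤ (s n + c) * Δ n :=
          mul_le_mul_of_nonneg_right key (hΔ n)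
        nlinarith
      rw [Finset.sum_Icc_succ_top (by omega : 1 ≤ n + 1)]
      simp only [Nat.add_sub_cancel]
      linarith
  intro m _
  have hm := hspos m
  have := aux m
  rw [show ((s 0 + c) / (s m + c)) * Δ 0 = (s 0 + c) * Δ 0 / (s m + c) by ring]
  have hsum : ∑ j ∈ Finset.Icc 1 m, ((s j + c) / (s m + c)) * ebar (j - 1)
      = (∑ j ∈ Finset.Icc 1 m, (s j + c) * ebar (j - 1)) / (s m + c) := by
    rw [Finset.sum_div]
    exact Finset.sum_congr rfl fun j _ => by ring
  rw [hsum, ← add_div, le_div_iff₀ hm]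
  linarith [mul_comm (Δ m) (s m + c)]
end
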